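/- Let ξ_b be a random vector distributed uniformly on the unit ball {x ∈ ℝ^d : ‖x‖ ≤ 1} and let ξ = σ·ξ_b. Then for every unit vector v ∈ ℝ^d and every Borel set A ⊆ ℝ^d satisfying the (σ/(4√d), v)-narrow property, P(ξ ∈ A) ≤ 1/4; that is, ξ has the v-dispersive property for every unit vector v. -/

import Mathlib

open MeasureTheory Set Metric
open scoped ENNReal Pointwise


lemma narrow_prod_volume_le {n : ℕ} {q : ℝ} (hq : 0 ≤ q)
    (T : Set (ℝ × (Fin n → ℝ))) (hT : MeasurableSet T)
    (hsub : T ⊆ {p | p.1 ^ 2 + ∑ j, p.2 j ^ 2 ≤ 1})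
    (hnarrow : ∀ p ∈ T, ∀ r : ℝ, q ≤ r → (p.1 + r, p.2) ∉ T) :
    volume T ≤ ENNReal.ofReal q * volume {y : Fin n → ℝ | ∑ j, y j ^ 2 ≤ 1} := by
  have hBn : MeasurableSet {y : Fin n → ℝ | ∑ j, y j ^ 2 ≤ 1} :=
    measurableSet_le (by fun_prop) measurable_const
  rw [Measure.volume_eq_prod, Measure.prod_apply_symm hT]
  calc ∫⁻ y, volume ((fun x => (x, y)) ⁻¹' T) ∂volume
      ≤ ∫⁻ y, ({y : Fin n → ℝ | ∑ j, y j ^ 2 ≤ 1}).indicator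
          (fun _ => ENNReal.ofReal q) y ∂volume := by
        apply lintegral_mono
        intro y
        rcases eq_empty_or_nonempty ((fun x => (x, y)) ⁻¹' T) with he | ⟨t₀, ht₀⟩
        · simp [he]
        · have hyB : y ∈ {y : Fin n → ℝ | ∑ j, y j ^ 2 ≤ 1} := by
            have h1 := hsub ht₀
            simp only [mem_setOf_eq] at h1 ⊢
            nlinarith [sq_nonneg t₀]
          rw [Set.indicator_of_mem hyB]
          set s : Set ℝ := (fun x => (x, y)) ⁻¹' T with hs
          have hbdd : BddBelow s := by
            refine ⟨-1, fun t ht => ?_⟩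
            have h1 := hsub ht
            simp only [mem_setOf_eq] at h1
            nlinarith [Finset.sum_nonneg (fun j (_ : j ∈ Finset.univ) => sq_nonneg (y j))]
          have hkey : ∀ t ∈ s, ∀ t' ∈ s, t - t' < q := by
            intro t ht t' ht'
            by_contra h
            push_neg at h
            have := hnarrow (t', y) ht' (t - t') h
            simp only [hs, mem_preimage] at ht
            exact this (by simpa using ht)
          have hsub2 : s ⊆ Icc (sInf s) (sInf s + q) := by
            intro t ht
            refine ⟨csInf_le hbdd ht, ?_⟩
            have h2 : t - q ≤ sInf s :=
              le_csInf ⟨t₀, ht₀⟩ (fun t' ht' => by linarith [hkey t ht t' ht'])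
            linarith
          calc volume s ≤ volume (Icc (sInf s) (sInf s + q)) := measure_mono hsub2
            _ = ENNReal.ofReal q := by rw [Real.volume_Icc]; ring_nf
    _ = ENNReal.ofReal q * volume {y : Fin n → ℝ | ∑ j, y j ^ 2 ≤ 1} :=
        lintegral_indicator_const hBn _

lemma phi_apply {n : ℕ} (z : EuclideanSpace ℝ (Fin (n+1))) :
    ((MeasurableEquiv.toLp 2 (Fin (n+1) → ℝ)).symm.trans
      (MeasurableEquiv.piFinSuccAbove (fun _ => ℝ) 0)) z = (z 0, fun j => z j.succ) := by
  simp [MeasurableEquiv.piFinSuccAbove, MeasurableEquiv.toLp, Fin.insertNthEquiv]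
  exact ⟨rfl, rfl⟩

lemma phi_measurePreserving {n : ℕ} :
    MeasurePreserving ((MeasurableEquiv.toLp 2 (Fin (n+1) → ℝ)).symm.trans
      (MeasurableEquiv.piFinSuccAbove (fun _ => ℝ) 0)) volume volume :=
  (volume_preserving_piFinSuccAbove (fun _ : Fin (n+1) => ℝ) 0).comp
    (EuclideanSpace.volume_preserving_symm_measurableEquiv_toLp (Fin (n+1)))


lemma narrow_euclidean_volume_le {n : ℕ} {q : ℝ} (hq : 0 ≤ q)
    (S : Set (EuclideanSpace ℝ (Fin (n + 1)))) (hS : MeasurableSet S)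
    (v : EuclideanSpace ℝ (Fin (n + 1))) (hv : ‖v‖ = 1)
    (hnarrow : ∀ u ∈ S, ∀ r : ℝ, q ≤ r → u + r • v ∉ S) :
    volume (S ∩ closedBall 0 1) ≤
      ENNReal.ofReal q * volume {y : Fin n → ℝ | ∑ j, y j ^ 2 ≤ 1} := by
  classical
  set e₀ : EuclideanSpace ℝ (Fin (n+1)) := EuclideanSpace.single 0 1 with he₀
  have he₀norm : ‖e₀‖ = 1 := by simp [he₀]
  set f := Submodule.reflection (ℝ ∙ (v - e₀))ᗮ with hf
  have hfv : f v = e₀ := Submodule.reflection_sub (by rw [hv, he₀norm])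
  set X := S ∩ closedBall (0 : EuclideanSpace ℝ (Fin (n+1))) 1 with hX
  have hXm : MeasurableSet X := hS.inter measurableSet_closedBall
  set Y := ⇑f '' X with hY
  have hYeq : Y = ⇑f.symm ⁻¹' X :=
    hY.trans (congrFun (Set.image_eq_preimage_of_inverse f.symm_apply_apply f.apply_symm_apply) X)
  have hYm : MeasurableSet Y := by
    rw [hYeq]; exact hXm.preimage f.symm.continuous.measurable
  have hvolXY : volume X = volume Y := by
    have := f.measurePreserving.measure_preimage hYm.nullMeasurableSet
    rwa [hY, Set.preimage_image_eq X f.injective] at this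
  -- Y is narrow along e₀ and inside the ball
  have hYball : Y ⊆ closedBall 0 1 := by
    rintro _ ⟨x, hx, rfl⟩
    simp only [mem_closedBall_zero_iff]
    rw [f.norm_map]
    exact mem_closedBall_zero_iff.mp hx.2
  have hYnarrow : ∀ u ∈ Y, ∀ r : ℝ, q ≤ r → u + r • e₀ ∉ Y := by
    rintro _ ⟨x, hx, rfl⟩ r hr hmem
    rw [← hfv, ← f.map_smul, ← f.map_add] at hmem
    rw [hYeq, Set.mem_preimage, f.symm_apply_apply] at hmem
    exact hnarrow x hx.1 r hr hmem.1
  -- transport to the product space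
  set Φ := ((MeasurableEquiv.toLp 2 (Fin (n+1) → ℝ)).symm.trans
      (MeasurableEquiv.piFinSuccAbove (fun _ => ℝ) 0)) with hΦdef
  set T := ⇑Φ '' Y with hT
  have hTeq : T = ⇑Φ.symm ⁻¹' Y :=
    hT.trans (congrFun (Set.image_eq_preimage_of_inverse Φ.symm_apply_apply Φ.apply_symm_apply) Y)
  have hTm : MeasurableSet T := by
    rw [hTeq]; exact hYm.preimage Φ.symm.measurable
  have hvolYT : volume Y = volume T := by
    have := (phi_measurePreserving (n := n)).measure_preimage hTm.nullMeasurableSet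
    rwa [hT, Set.preimage_image_eq Y Φ.injective] at this
  rw [hvolXY, hvolYT]
  apply narrow_prod_volume_le hq T hTm
  · rintro _ ⟨z, hz, rfl⟩
    rw [phi_apply]
    have hz1 := hYball hz
    rw [EuclideanSpace.closedBall_zero_eq 1 zero_le_one] at hz1
    have h2 : ∑ i, z i ^ 2 ≤ 1 := by simpa using hz1
    simp only [mem_setOf_eq]
    rw [Fin.sum_univ_succ] at h2
    exact h2
  · rintro ⟨t, y⟩ hp r hr hmem
    obtain ⟨z, hz, hzeq⟩ := hp
    rw [phi_apply] at hzeq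
    obtain ⟨w, hw, hweq⟩ := hmem
    rw [phi_apply] at hweq
    have hwz : w = z + r • e₀ := by
      ext i
      induction i using Fin.cases with
      | zero =>
        have h1 : w 0 = t + r := congrArg Prod.fst hweq
        have h2 : z 0 = t := congrArg Prod.fst hzeq
        simp [PiLp.add_apply, PiLp.smul_apply, he₀, EuclideanSpace.single_apply, h1, h2]
      | succ j =>
        have h1 : w j.succ = y j := congrFun (congrArg Prod.snd hweq) j
        have h2 : z j.succ = y j := congrFun (congrArg Prod.snd hzeq) j
        simp [PiLp.add_apply, PiLp.smul_apply, he₀, EuclideanSpace.single_apply,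
          h1, h2, Fin.succ_ne_zero]
    rw [hwz] at hw
    exact hYnarrow z hz r hr hw

lemma pow_half_bound (n : ℕ) : (1:ℝ)/2 ≤ (Real.sqrt ((n:ℝ)/(n+1)))^n := by
  rcases Nat.eq_zero_or_pos n with rfl | hn
  · norm_num
  · have hn0 : (0:ℝ) < n := by exact_mod_cast hn
    set a : ℝ := (n:ℝ)/(n+1) with ha
    have ha0 : 0 < a := by positivity
    have hb : ((n+1:ℝ)/n)^n ≤ Real.exp 1 := by
      have h1 : (n+1:ℝ)/n = 1/n + 1 := by field_simp; ring
      have h2 : (1:ℝ)/n + 1 ≤ Real.exp (1/n) := Real.add_one_le_exp _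
      calc ((n+1:ℝ)/n)^n ≤ (Real.exp (1/n))^n := by
            rw [h1]; exact pow_le_pow_left₀ (by positivity) h2 n
        _ = Real.exp ((n:ℝ) * (1/n)) := (Real.exp_nat_mul _ n).symm
        _ = Real.exp 1 := by rw [mul_one_div, div_self hn0.ne']
    have hb4 : ((n+1:ℝ)/n)^n ≤ 4 := hb.trans (Real.exp_one_lt_d9.le.trans (by norm_num))
    have hbpos : 0 < ((n+1:ℝ)/n)^n := by positivity
    have hprod : a^n * ((n+1:ℝ)/n)^n = 1 := by
      rw [← mul_pow, ha]
      rw [show (n:ℝ)/(n+1) * ((n+1)/n) = 1 by field_simp]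
      exact one_pow n
    have hpow : (1:ℝ)/4 ≤ a^n := by
      rw [show (1:ℝ)/4 = 4⁻¹ by norm_num]
      calc (4:ℝ)⁻¹ ≤ (((n+1:ℝ)/n)^n)⁻¹ := by
            exact inv_anti₀ hbpos hb4
        _ = a^n := by
            field_simp at hprod ⊢
            nlinarith [hprod]
    have hsqnn : 0 ≤ (Real.sqrt a)^n := pow_nonneg (Real.sqrt_nonneg a) n
    have hsq : ((Real.sqrt a)^n)^2 = a^n := by
      rw [← pow_mul, pow_mul', Real.sq_sqrt ha0.le]
    nlinarith [hsqnn, hsq, hpow]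

lemma quarter_bound {n : ℕ} :
    ENNReal.ofReal (1 / (4 * Real.sqrt (n+1))) * volume {y : Fin n → ℝ | ∑ j, y j ^ 2 ≤ 1}
      ≤ (1/4 : ℝ≥0∞) * volume (closedBall (0 : EuclideanSpace ℝ (Fin (n+1))) 1) := by
  classical
  set Bn : Set (Fin n → ℝ) := {y | ∑ j, y j ^ 2 ≤ 1} with hBn
  have hBnm : MeasurableSet Bn := measurableSet_le (by fun_prop) measurable_const
  set t : ℝ := Real.sqrt (1/(n+1)) with htdef
  set s : ℝ := Real.sqrt ((n:ℝ)/(n+1)) with hsdef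
  have ht0 : 0 < t := Real.sqrt_pos.2 (by positivity)
  have hs0 : 0 ≤ s := Real.sqrt_nonneg _
  have hts : t^2 + s^2 = 1 := by
    rw [htdef, hsdef, Real.sq_sqrt (by positivity), Real.sq_sqrt (by positivity)]
    field_simp
    ring
  set Φ := ((MeasurableEquiv.toLp 2 (Fin (n+1) → ℝ)).symm.trans
      (MeasurableEquiv.piFinSuccAbove (fun _ => ℝ) 0)) with hΦdef
  set C : Set (EuclideanSpace ℝ (Fin (n+1))) := ⇑Φ ⁻¹' (Icc (-t) t ×ˢ (s • Bn)) with hC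
  have hprodm : MeasurableSet (Icc (-t) t ×ˢ (s • Bn)) :=
    measurableSet_Icc.prod (hBnm.const_smul₀ s)
  have hCsub : C ⊆ closedBall 0 1 := by
    intro x hx
    rw [hC, mem_preimage, phi_apply] at hx
    obtain ⟨hx1, hx2⟩ := hx
    rw [EuclideanSpace.closedBall_zero_eq 1 zero_le_one]
    obtain ⟨y, hy, hyeq⟩ := hx2
    have h1 : ∑ j : Fin n, x j.succ ^ 2 ≤ s^2 := by
      have : ∀ j, x j.succ = s * y j := fun j => (congrFun hyeq j).symm
      simp only [this, mul_pow, ← Finset.mul_sum]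
      calc s^2 * ∑ j, y j ^2 ≤ s^2 * 1 := by
            apply mul_le_mul_of_nonneg_left hy (sq_nonneg s)
        _ = s^2 := mul_one _
    have h2 : x 0 ^ 2 ≤ t^2 := by
      rw [mem_Icc] at hx1
      nlinarith [hx1.1, hx1.2]
    simp only [mem_setOf_eq]
    rw [Fin.sum_univ_succ]
    calc x 0 ^2 + ∑ j : Fin n, x j.succ ^2 ≤ t^2 + s^2 := add_le_add h2 h1
      _ = 1 := hts
      _ = 1^2 := by norm_num
    -- done
  have hCvol : volume C = ENNReal.ofReal (2*t) * (ENNReal.ofReal (s^n) * volume Bn) := by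
    rw [hC, (phi_measurePreserving (n := n)).measure_preimage hprodm.nullMeasurableSet,
      Measure.volume_eq_prod, Measure.prod_prod, Real.volume_Icc,
      Measure.addHaar_smul_of_nonneg volume hs0 Bn, Module.finrank_fin_fun,
      show t - -t = 2*t by ring]
  have harith : ENNReal.ofReal (1 / (4 * Real.sqrt (n+1)))
      ≤ (1/4 : ℝ≥0∞) * (ENNReal.ofReal (2*t) * ENNReal.ofReal (s^n)) := by
    have h14 : (1/4 : ℝ≥0∞) = ENNReal.ofReal (1/4) := by
      rw [ENNReal.ofReal_div_of_pos (by norm_num), ENNReal.ofReal_one, ENNReal.ofReal_ofNat]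
    rw [h14, ← ENNReal.ofReal_mul (by positivity), ← ENNReal.ofReal_mul (by norm_num)]
    apply ENNReal.ofReal_le_ofReal
    have hhalf : (1:ℝ)/2 ≤ s^n := pow_half_bound n
    have htinv : t = 1 / Real.sqrt (n+1) := by
      rw [htdef, one_div, Real.sqrt_inv, one_div]
    have hsq : 0 < Real.sqrt ((n:ℝ)+1) := Real.sqrt_pos.2 (by positivity)
    rw [htinv]
    rw [div_le_iff₀ (by positivity)]
    have expand : 1 / 4 * (2 * (1 / Real.sqrt (↑n + 1)) * s ^ n) * (4 * Real.sqrt (↑n + 1))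
        = 2 * s^n := by field_simp
    rw [expand]
    nlinarith [hhalf]
  calc ENNReal.ofReal (1 / (4 * Real.sqrt (n+1))) * volume Bn
      ≤ ((1/4 : ℝ≥0∞) * (ENNReal.ofReal (2*t) * ENNReal.ofReal (s^n))) * volume Bn :=
        mul_le_mul_left harith _
    _ = (1/4 : ℝ≥0∞) * volume C := by rw [hCvol]; ring
    _ ≤ (1/4 : ℝ≥0∞) * volume (closedBall 0 1) :=
        mul_le_mul_right (measure_mono hCsub) _


open MeasureTheory ProbabilityTheory

/-- A vector `ξ_b` uniform on the unit ball of `ℝ^d`, rescaled as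
`ξ = σ·ξ_b`, has the `v`-dispersive property for every unit vector `v`: for every
Borel set `A` with the `(σ/(4√d), v)`-narrow property, `P(ξ ∈ A) ≤ 1/4`. -/
theorem uniform_ball_noise_is_dispersive {d : ℕ} (hd : 1 ≤ d)
    {Ω : Type*} [MeasurableSpace Ω] (P : Measure Ω) [IsProbabilityMeasure P]
    (σ : ℝ) (hσ : 0 < σ)
    (ξb : Ω → EuclideanSpace ℝ (Fin d)) (hξbmeas : Measurable ξb)
    (hξblaw : Measure.map ξb P =
      (volume (Metric.closedBall (0 : EuclideanSpace ℝ (Fin d)) 1))⁻¹ •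
        volume.restrict (Metric.closedBall (0 : EuclideanSpace ℝ (Fin d)) 1))
    (v : EuclideanSpace ℝ (Fin d)) (hv : ‖v‖ = 1)
    (A : Set (EuclideanSpace ℝ (Fin d))) (hA : MeasurableSet A)
    (hnarrow : ∀ u ∈ A, ∀ q : ℝ, σ / (4 * Real.sqrt d) ≤ q → u + q • v ∉ A) :
    P {ω | σ • ξb ω ∈ A} ≤ 1 / 4 := by
  obtain ⟨n, rfl⟩ : ∃ n, d = n + 1 := ⟨d - 1, (Nat.succ_pred_eq_of_pos hd).symm⟩
  set q : ℝ := 1 / (4 * Real.sqrt ((n : ℝ) + 1)) with hqdef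
  have hq0 : (0:ℝ) ≤ q := by positivity
  set S : Set (EuclideanSpace ℝ (Fin (n+1))) := (σ • ·) ⁻¹' A with hSdef
  have hSmeas : MeasurableSet S := hA.preimage (measurable_const_smul σ)
  have hcast : ((n + 1 : ℕ) : ℝ) = (n : ℝ) + 1 := by push_cast; ring
  have hSnarrow : ∀ u ∈ S, ∀ r : ℝ, q ≤ r → u + r • v ∉ S := by
    intro u hu r hr hmem
    have hle : σ / (4 * Real.sqrt ((n + 1 : ℕ) : ℝ)) ≤ σ * r := by
      rw [hcast]
      have h1 : σ / (4 * Real.sqrt ((n : ℝ) + 1)) = σ * q := by rw [hqdef]; ring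
      rw [h1]
      exact mul_le_mul_of_nonneg_left hr hσ.le
    have := hnarrow (σ • u) hu (σ * r) hle
    apply this
    have hmem' : σ • (u + r • v) ∈ A := hmem
    rwa [smul_add, smul_smul] at hmem'
  have key1 := narrow_euclidean_volume_le hq0 S hSmeas v hv hSnarrow
  have key2 := quarter_bound (n := n)
  have hchain : volume (S ∩ Metric.closedBall 0 1) ≤
      (1/4 : ℝ≥0∞) * volume (Metric.closedBall (0 : EuclideanSpace ℝ (Fin (n+1))) 1) :=
    key1.trans key2
  have hset : {ω | σ • ξb ω ∈ A} = ξb ⁻¹' S := rfl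
  rw [hset, ← Measure.map_apply hξbmeas hSmeas, hξblaw, Measure.smul_apply,
    Measure.restrict_apply hSmeas, smul_eq_mul]
  have h0 : volume (Metric.closedBall (0 : EuclideanSpace ℝ (Fin (n+1))) 1) ≠ 0 :=
    (measure_closedBall_pos volume 0 one_pos).ne'
  have htop : volume (Metric.closedBall (0 : EuclideanSpace ℝ (Fin (n+1))) 1) ≠ ⊤ :=
    measure_closedBall_lt_top.ne
  calc (volume (Metric.closedBall (0 : EuclideanSpace ℝ (Fin (n+1))) 1))⁻¹ *
        volume (S ∩ Metric.closedBall 0 1)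
      ≤ (volume (Metric.closedBall (0 : EuclideanSpace ℝ (Fin (n+1))) 1))⁻¹ *
        ((1/4 : ℝ≥0∞) * volume (Metric.closedBall (0 : EuclideanSpace ℝ (Fin (n+1))) 1)) :=
        mul_le_mul_right hchain _
    _ = (1/4 : ℝ≥0∞) * ((volume (Metric.closedBall (0 : EuclideanSpace ℝ (Fin (n+1))) 1))⁻¹ *
        volume (Metric.closedBall (0 : EuclideanSpace ℝ (Fin (n+1))) 1)) := by ring
    _ = 1/4 := by rw [ENNReal.inv_mul_cancel h0 htop, mul_one]
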